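/- Let $R$ and $I$ be real symmetric $n \times n$ matrices with $R$ positive definite, and set $C = R + iI$. Then $\lambda_{\max}\big(\mathrm{Re}(C^{-1})\big) \leq \lambda_{\min}(R)^{-1}$ and $\lambda_{\max}(R) \leq \lambda_{\min}\big(\mathrm{Re}(C^{-1})\big)^{-1}$. -/

import Mathlib

open Matrix

set_option linter.unusedSectionVars false

section Helpers

variable {n : Type*} [Fintype n] [DecidableEq n] [Nonempty n]

private lemma rayleigh_bounds' {A : Matrix n n ℝ} (hA : A.IsHermitian) (x : n → ℝ) :
    (⨅ i, hA.eigenvalues i) * (x ⬝ᵥ x) ≤ x ⬝ᵥ A *ᵥ x ∧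
      x ⬝ᵥ A *ᵥ x ≤ (⨆ i, hA.eigenvalues i) * (x ⬝ᵥ x) := by
  set U : Matrix n n ℝ := (hA.eigenvectorUnitary : Matrix n n ℝ) with hU
  set z := star U *ᵥ x with hz
  have hxU : x ᵥ* U = z := by
    ext j
    simp [hz, vecMul, mulVec, dotProduct, star, conjTranspose, mul_comm]
  have h1 : x ⬝ᵥ A *ᵥ x = ∑ i, hA.eigenvalues i * z i ^ 2 := by
    conv_lhs => rw [hA.spectral_theorem, Unitary.conjStarAlgAut_apply]
    rw [← mulVec_mulVec, ← mulVec_mulVec, dotProduct_mulVec, hxU, dotProduct_mulVec, ← hU, ← hz]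
    simp [vecMul_diagonal, dotProduct, Function.comp]
    exact Finset.sum_congr rfl fun i _ => by ring
  have h2 : x ⬝ᵥ x = ∑ i, z i ^ 2 := by
    have hUU : U * star U = 1 := (Matrix.mem_unitaryGroup_iff).mp hA.eigenvectorUnitary.2
    have : x ⬝ᵥ x = x ⬝ᵥ (U * star U) *ᵥ x := by rw [hUU, one_mulVec]
    rw [this, ← mulVec_mulVec, dotProduct_mulVec, hxU, ← hz]
    simp [dotProduct, pow_two]
  have hbdd : BddBelow (Set.range hA.eigenvalues) := Set.Finite.bddBelow (Set.finite_range _)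
  have hbdd' : BddAbove (Set.range hA.eigenvalues) := Set.Finite.bddAbove (Set.finite_range _)
  constructor
  · rw [h1, h2, Finset.mul_sum]
    exact Finset.sum_le_sum fun i _ =>
      mul_le_mul_of_nonneg_right (ciInf_le hbdd i) (sq_nonneg _)
  · rw [h1, h2, Finset.mul_sum]
    exact Finset.sum_le_sum fun i _ =>
      mul_le_mul_of_nonneg_right (le_ciSup hbdd' i) (sq_nonneg _)

private lemma dot_expand' (A : Matrix n n ℝ) (y : n → ℂ) :
    star y ⬝ᵥ (A.map Complex.ofReal *ᵥ y)
      = ∑ j, ∑ k, (starRingEnd ℂ) (y j) * ((A j k : ℂ) * y k) := by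
  simp [dotProduct, mulVec, Finset.mul_sum]

private lemma re_dot' (A : Matrix n n ℝ) (y : n → ℂ) :
    (star y ⬝ᵥ (A.map Complex.ofReal *ᵥ y)).re
      = (fun j => (y j).re) ⬝ᵥ A *ᵥ (fun j => (y j).re)
        + (fun j => (y j).im) ⬝ᵥ A *ᵥ (fun j => (y j).im) := by
  rw [dot_expand']
  rw [Complex.re_sum]
  simp only [Complex.im_sum, Complex.re_sum, Complex.mul_re, Complex.mul_im,
    Complex.conj_re, Complex.conj_im, Complex.ofReal_re, Complex.ofReal_im]
  simp [dotProduct, mulVec, Finset.mul_sum, Finset.sum_add_distrib]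

private lemma im_dot' (A : Matrix n n ℝ) (hA : Aᵀ = A) (y : n → ℂ) :
    (star y ⬝ᵥ (A.map Complex.ofReal *ᵥ y)).im = 0 := by
  rw [dot_expand', Complex.im_sum]
  have h : ∀ j k, ((starRingEnd ℂ) (y j) * ((A j k : ℂ) * y k)).im
      = A j k * ((y j).re * (y k).im) - A j k * ((y j).im * (y k).re) := by
    intro j k
    simp [Complex.mul_im, Complex.mul_re]
    ring
  simp only [Complex.im_sum, h, Finset.sum_sub_distrib]
  rw [sub_eq_zero]
  rw [Finset.sum_comm]
  refine Finset.sum_congr rfl fun j _ => Finset.sum_congr rfl fun k _ => ?_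
  have h2 : A k j = A j k := congrFun (congrFun hA j) k
  rw [h2]; ring

/-- real part of the quadratic form of `C = R + iI`. -/
private lemma re_quad' (R I : Matrix n n ℝ) (hI : Iᵀ = I) (C : Matrix n n ℂ)
    (hC : C = R.map (Complex.ofReal) + Complex.I • I.map (Complex.ofReal)) (y : n → ℂ) :
    (star y ⬝ᵥ (C *ᵥ y)).re
      = (fun j => (y j).re) ⬝ᵥ R *ᵥ (fun j => (y j).re)
        + (fun j => (y j).im) ⬝ᵥ R *ᵥ (fun j => (y j).im) := by
  subst hC
  rw [add_mulVec, smul_mulVec, dotProduct_add, dotProduct_smul]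
  rw [Complex.add_re, smul_eq_mul, Complex.mul_re]
  rw [im_dot' I hI y]
  simp [re_dot' R y]

private lemma eig_congr' {A B : Matrix n n ℝ} (h : A = B) (hA : A.IsHermitian)
    (hB : B.IsHermitian) : hA.eigenvalues = hB.eigenvalues := by subst h; rfl

private lemma posdef_quad' (R : Matrix n n ℝ) (hR : R.PosDef) (a b : n → ℝ)
    (hab : a ≠ 0 ∨ b ≠ 0) : 0 < a ⬝ᵥ R *ᵥ a + b ⬝ᵥ R *ᵥ b := by
  have h1 : ∀ c : n → ℝ, 0 ≤ c ⬝ᵥ R *ᵥ c := by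
    intro c
    rcases eq_or_ne c 0 with h | h
    · simp [h]
    · exact le_of_lt (by simpa using hR.dotProduct_mulVec_pos h)
  have h2 : ∀ c : n → ℝ, c ≠ 0 → 0 < c ⬝ᵥ R *ᵥ c := fun c hc => by simpa using hR.dotProduct_mulVec_pos hc
  rcases hab with h | h
  · exact add_pos_of_pos_of_nonneg (h2 a h) (h1 b)
  · exact add_pos_of_nonneg_of_pos (h1 a) (h2 b h)

private lemma key_det' (R I : Matrix n n ℝ) (hR : R.PosDef) (hIt : Iᵀ = I) (C : Matrix n n ℂ)
    (hC : C = R.map (Complex.ofReal) + Complex.I • I.map (Complex.ofReal)) :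
    IsUnit C.det := by
  rw [isUnit_iff_ne_zero]
  intro hdet
  obtain ⟨v, hv, hCv⟩ := (Matrix.exists_mulVec_eq_zero_iff).mpr hdet
  have h0 : (star v ⬝ᵥ (C *ᵥ v)).re = 0 := by rw [hCv]; simp
  rw [re_quad' R I hIt C hC v] at h0
  have hab : (fun j => (v j).re) ≠ 0 ∨ (fun j => (v j).im) ≠ 0 := by
    by_contra h
    push_neg at h
    apply hv
    funext j
    have h1 := congrFun h.1 j
    have h2 := congrFun h.2 j
    simp only [Pi.zero_apply] at h1 h2
    exact Complex.ext h1 h2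
  exact absurd h0 (ne_of_gt (posdef_quad' R hR _ _ hab))

/-- The key quadratic bound. -/
private lemma key_quad' (R I : Matrix n n ℝ) (hR : R.PosDef) (hIt : Iᵀ = I) (C : Matrix n n ℂ)
    (hC : C = R.map (Complex.ofReal) + Complex.I • I.map (Complex.ofReal)) (x : n → ℝ) :
    x ⬝ᵥ (C⁻¹.map Complex.re) *ᵥ x ≤ (⨅ i, hR.1.eigenvalues i)⁻¹ * (x ⬝ᵥ x) ∧
      (x ≠ 0 → 0 < x ⬝ᵥ (C⁻¹.map Complex.re) *ᵥ x) := by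
  have hdet := key_det' R I hR hIt C hC
  set lam := ⨅ i, hR.1.eigenvalues i with hlam
  have hlampos : 0 < lam := by
    obtain ⟨i, hi⟩ := exists_eq_ciInf_of_finite (f := hR.1.eigenvalues)
    rw [hlam, ← hi]
    exact hR.eigenvalues_pos i
  set xc : n → ℂ := fun j => (x j : ℂ) with hxc
  set y : n → ℂ := C⁻¹ *ᵥ xc with hy
  set a : n → ℝ := fun j => (y j).re with ha
  set b : n → ℝ := fun j => (y j).im with hb
  have hMx : (C⁻¹.map Complex.re) *ᵥ x = a := by
    funext j
    simp only [mulVec, dotProduct, map_apply, ha, hy, hxc]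
    rw [Complex.re_sum]
    exact Finset.sum_congr rfl fun k _ => by simp [Complex.mul_re]
  have hCy : C *ᵥ y = xc := by
    rw [hy, mulVec_mulVec, Matrix.mul_nonsing_inv C hdet, one_mulVec]
  have hr1 : x ⬝ᵥ (C⁻¹.map Complex.re) *ᵥ x = x ⬝ᵥ a := by rw [hMx]
  have hr2 : x ⬝ᵥ a = a ⬝ᵥ R *ᵥ a + b ⬝ᵥ R *ᵥ b := by
    have h := re_quad' R I hIt C hC y
    rw [hCy] at h
    rw [← h]
    simp only [dotProduct, hxc]
    rw [Complex.re_sum]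
    exact Finset.sum_congr rfl fun j _ => by simp [Complex.mul_re, ha, mul_comm]
  set r := x ⬝ᵥ a with hrdef
  have hrayA := rayleigh_bounds' hR.1 a
  have hrayB := rayleigh_bounds' hR.1 b
  have hlow : lam * (a ⬝ᵥ a + b ⬝ᵥ b) ≤ r := by
    rw [hr2, mul_add]
    exact add_le_add hrayA.1 hrayB.1
  constructor
  · rw [hr1]
    have hcs : r ^ 2 ≤ (x ⬝ᵥ x) * (a ⬝ᵥ a) := by
      have := Finset.sum_mul_sq_le_sq_mul_sq Finset.univ x a
      simpa [dotProduct, pow_two, hrdef] using this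
    have hbb : (0:ℝ) ≤ b ⬝ᵥ b := Finset.sum_nonneg fun i _ => mul_self_nonneg _
    have haa : (0:ℝ) ≤ a ⬝ᵥ a := Finset.sum_nonneg fun i _ => mul_self_nonneg _
    have hxx : (0:ℝ) ≤ x ⬝ᵥ x := Finset.sum_nonneg fun i _ => mul_self_nonneg _
    rcases le_or_gt r 0 with hr0 | hr0
    · exact le_trans hr0 (by positivity)
    · have step : lam * r ^ 2 ≤ (x ⬝ᵥ x) * r := by
        calc lam * r ^ 2 ≤ lam * ((x ⬝ᵥ x) * (a ⬝ᵥ a + b ⬝ᵥ b)) := by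
              apply mul_le_mul_of_nonneg_left _ (le_of_lt hlampos)
              calc r ^ 2 ≤ (x ⬝ᵥ x) * (a ⬝ᵥ a) := hcs
                _ ≤ (x ⬝ᵥ x) * (a ⬝ᵥ a + b ⬝ᵥ b) := by nlinarith
          _ = (x ⬝ᵥ x) * (lam * (a ⬝ᵥ a + b ⬝ᵥ b)) := by ring
          _ ≤ (x ⬝ᵥ x) * r := mul_le_mul_of_nonneg_left hlow hxx
      have : lam * r ≤ x ⬝ᵥ x := by nlinarith
      rw [inv_mul_eq_div, le_div_iff₀ hlampos]
      linarith [this]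
  · intro hx
    rw [hr1]
    have hy0 : y ≠ 0 := by
      intro h
      apply hx
      have : xc = 0 := by rw [← hCy, h, mulVec_zero]
      funext j
      have := congrFun this j
      simpa [hxc] using congrArg Complex.re this
    have hab : a ≠ 0 ∨ b ≠ 0 := by
      by_contra h
      push_neg at h
      apply hy0
      funext j
      exact Complex.ext (congrFun h.1 j) (congrFun h.2 j)
    rw [hr2]
    exact posdef_quad' R hR a b hab

private lemma key_main' (R I : Matrix n n ℝ) (hR : R.PosDef) (hIt : Iᵀ = I) (C : Matrix n n ℂ)
    (hC : C = R.map (Complex.ofReal) + Complex.I • I.map (Complex.ofReal))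
    (hM : (C⁻¹.map Complex.re).IsHermitian) :
    (C⁻¹.map Complex.re).PosDef ∧
      (⨆ i, hM.eigenvalues i) ≤ (⨅ i, hR.1.eigenvalues i)⁻¹ := by
  constructor
  · refine PosDef.of_dotProduct_mulVec_pos hM fun x hx => ?_
    have := (key_quad' R I hR hIt C hC x).2 hx
    simpa using this
  · apply ciSup_le
    intro i
    set v : n → ℝ := ⇑(hM.eigenvectorBasis i) with hv
    have hv1 : v ⬝ᵥ v = 1 := by
      have h := hM.eigenvectorBasis.orthonormal.1 i
      have h2 : (inner ℝ (hM.eigenvectorBasis i) (hM.eigenvectorBasis i) : ℝ) = 1 := by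
        rw [real_inner_self_eq_norm_mul_norm, h]; norm_num
      rw [EuclideanSpace.inner_eq_star_dotProduct] at h2
      simpa using h2
    have heig : hM.eigenvalues i = v ⬝ᵥ ((C⁻¹.map Complex.re) *ᵥ v) := by
      have := hM.eigenvalues_eq i
      simpa using this
    rw [heig]
    have := (key_quad' R I hR hIt C hC v).1
    rw [hv1] at this
    simpa using this

end Helpers

/-- For `C = R + iI` with `R` real symmetric positive definite and `I` real symmetric:
`λmax(Re C⁻¹) ≤ λmin(R)⁻¹` and `λmax(R) ≤ λmin(Re C⁻¹)⁻¹`. -/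
theorem re_inv_eigenvalue_bounds {n : Type*} [Fintype n] [DecidableEq n] [Nonempty n]
    (R I : Matrix n n ℝ) (hR : R.PosDef) (hI : I.IsHermitian)
    (C : Matrix n n ℂ)
    (hC : C = R.map (Complex.ofReal) + Complex.I • I.map (Complex.ofReal))
    (hM : (C⁻¹.map Complex.re).IsHermitian) :
    (⨆ i, hM.eigenvalues i) ≤ (⨅ i, hR.1.eigenvalues i)⁻¹ ∧
      (⨆ i, hR.1.eigenvalues i) ≤ (⨅ i, hM.eigenvalues i)⁻¹ := by
  have hIt : Iᵀ = I := by
    ext j k; exact congrFun (congrFun hI j) k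
  have hRt : Rᵀ = R := by
    ext j k; exact congrFun (congrFun hR.1 j) k
  obtain ⟨hMpos, hbound1⟩ := key_main' R I hR hIt C hC hM
  refine ⟨hbound1, ?_⟩
  have hdet : IsUnit C.det := key_det' R I hR hIt C hC
  have hCt : Cᵀ = C := by
    subst hC
    ext j k
    simp only [transpose_apply, Matrix.add_apply, map_apply, Matrix.smul_apply, smul_eq_mul]
    rw [show R k j = R j k from congrFun (congrFun hRt j) k,
      show I k j = I j k from congrFun (congrFun hIt j) k]
  have hCinvT : (C⁻¹)ᵀ = C⁻¹ := by rw [transpose_nonsing_inv, hCt]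
  set M := C⁻¹.map Complex.re with hMdef
  set N := C⁻¹.map Complex.im with hNdef
  have hNt : Nᵀ = N := by
    ext j k
    exact congrArg Complex.im (congrFun (congrFun hCinvT j) k)
  have hC' : C⁻¹ = M.map Complex.ofReal + Complex.I • N.map Complex.ofReal := by
    ext j k
    simp only [Matrix.add_apply, map_apply, Matrix.smul_apply, smul_eq_mul, hMdef, hNdef]
    rw [mul_comm]
    exact (Complex.re_add_im _).symm
  have hmat : ((C⁻¹)⁻¹).map Complex.re = R := by
    rw [nonsing_inv_nonsing_inv C hdet, hC]
    ext j k
    simp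
  have hM2 : (((C⁻¹)⁻¹).map Complex.re).IsHermitian := hmat ▸ hR.1
  obtain ⟨-, hbound2⟩ := key_main' M N hMpos hNt (C⁻¹) hC' hM2
  rw [eig_congr' hmat hM2 hR.1] at hbound2
  have : hMpos.1.eigenvalues = hM.eigenvalues := rfl
  rw [this] at hbound2
  exact hbound2
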